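/- arXiv:2206.05036 — 4 statements merged into one kernel-verified Lean document; each statement's English description precedes it below -/
import Mathlib

section
/- Let Ω be a class of C*-algebras that is closed under passing to unital hereditary C*-subalgebras, and let A be a unital simple C*-algebra. Then A belongs to TAΩ if and only if A belongs to STAΩ. -/
open Filter Topology
open scoped Matrix.Norms.L2Operator

section Defs

variable {A : Type*} [NonUnitalCStarAlgebra A] [PartialOrder A] [StarOrderedRing A]

def CuntzLE (a b : A) : Prop :=
  ∃ v : ℕ → A, Tendsto (fun n => ‖v n * b * star (v n) - a‖) atTop (nhds 0)

def CuntzLEIn (S : Set A) (a b : A) : Prop :=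
  ∃ v : ℕ → A, (∀ n, v n ∈ S) ∧ Tendsto (fun n => ‖v n * b * star (v n) - a‖) atTop (nhds 0)

noncomputable def cutoff (ε : ℝ) (a : A) : A := cfcₙ (fun t : ℝ => max 0 (t - ε)) a

def IsProjection (p : A) : Prop := IsSelfAdjoint p ∧ p * p = p

def IsSimpleCStarAlgebra (A : Type*) [NonUnitalCStarAlgebra A] : Prop :=
  (⊥ : TwoSidedIdeal A) ≠ ⊤ ∧
    ∀ I : TwoSidedIdeal A, IsClosed (I : Set A) → I = ⊥ ∨ I = ⊤

def IsCompletelyPositive {n : ℕ} (ψ : Matrix (Fin n) (Fin n) ℂ →ₗ[ℂ] A) : Prop :=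
  ∀ (k : ℕ) (M : Matrix (Fin k) (Fin k) (Matrix (Fin n) (Fin n) ℂ)),
    (∃ N : Matrix (Fin k) (Fin k) (Matrix (Fin n) (Fin n) ℂ), M = star N * N) →
      ∃ N' : Matrix (Fin k) (Fin k) A, M.map ψ = star N' * N'

def IsOrderZeroCPCInto {n : ℕ} (S : Set A) (ψ : Matrix (Fin n) (Fin n) ℂ →ₗ[ℂ] A) : Prop :=
  (∀ x, ψ x ∈ S) ∧ IsCompletelyPositive ψ ∧ (∀ x, ‖ψ x‖ ≤ ‖x‖) ∧
    ∀ e f : Matrix (Fin n) (Fin n) ℂ, e * f = 0 → ψ e * ψ f = 0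

/-- A (possibly non-unital) C*-algebra is tracially 𝒵-absorbing. -/
def TraciallyZAbsorbing (A : Type*) [NonUnitalCStarAlgebra A] [PartialOrder A]
    [StarOrderedRing A] : Prop :=
  IsEmpty (A ≃⋆ₐ[ℂ] ℂ) ∧
    ∀ (F : Finset A) (ε : ℝ), 0 < ε → ∀ a b : A, 0 ≤ a → a ≠ 0 → 0 ≤ b → b ≠ 0 →
      ∀ n : ℕ, 0 < n →
        ∃ ψ : Matrix (Fin n) (Fin n) ℂ →ₗ[ℂ] A, IsOrderZeroCPCInto Set.univ ψ ∧
          CuntzLE (cutoff ε (b * b - b * ψ 1 * b)) a ∧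
          ∀ x : Matrix (Fin n) (Fin n) ℂ, ‖x‖ = 1 → ∀ y ∈ F, ‖ψ x * y - y * ψ x‖ < ε

/-- A C*-subalgebra `B ⊆ A` is tracially 𝒵-absorbing (as a C*-algebra in its own right). -/
def TraciallyZAbsorbingIn (B : NonUnitalStarSubalgebra ℂ A) : Prop :=
  IsEmpty (B ≃⋆ₐ[ℂ] ℂ) ∧
    ∀ (F : Finset A), (F : Set A) ⊆ (B : Set A) → ∀ ε : ℝ, 0 < ε →
      ∀ a b : A, a ∈ B → 0 ≤ a → a ≠ 0 → b ∈ B → 0 ≤ b → b ≠ 0 →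
        ∀ n : ℕ, 0 < n →
          ∃ ψ : Matrix (Fin n) (Fin n) ℂ →ₗ[ℂ] A, IsOrderZeroCPCInto (B : Set A) ψ ∧
            CuntzLEIn (B : Set A) (cutoff ε (b * b - b * ψ 1 * b)) a ∧
            ∀ x : Matrix (Fin n) (Fin n) ℂ, ‖x‖ = 1 → ∀ y ∈ F, ‖ψ x * y - y * ψ x‖ < ε

/-- The corner `p B p` of a subalgebra `B` by a projection `p`. -/
def corner (p : A) (B : NonUnitalStarSubalgebra ℂ A) : NonUnitalStarSubalgebra ℂ A where
  carrier := {x | x ∈ B ∧ p * x = x ∧ x * p = x ∧ p * star x = star x ∧ star x * p = star x}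
  add_mem' := by
    rintro x y ⟨hxB, hx1, hx2, hx3, hx4⟩ ⟨hyB, hy1, hy2, hy3, hy4⟩
    refine ⟨add_mem hxB hyB, ?_, ?_, ?_, ?_⟩ <;>
      simp [mul_add, add_mul, star_add, hx1, hx2, hx3, hx4, hy1, hy2, hy3, hy4]
  zero_mem' := ⟨zero_mem _, by simp, by simp, by simp, by simp⟩
  mul_mem' := by
    rintro x y ⟨hxB, hx1, hx2, hx3, hx4⟩ ⟨hyB, hy1, hy2, hy3, hy4⟩
    refine ⟨mul_mem hxB hyB, ?_, ?_, ?_, ?_⟩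
    · rw [← mul_assoc, hx1]
    · rw [mul_assoc, hy2]
    · rw [star_mul, ← mul_assoc, hy3]
    · rw [star_mul, mul_assoc, hx4]
  smul_mem' := by
    rintro c x ⟨hxB, hx1, hx2, hx3, hx4⟩
    refine ⟨SMulMemClass.smul_mem c hxB, ?_, ?_, ?_, ?_⟩ <;>
      simp [mul_smul_comm, smul_mul_assoc, star_smul, hx1, hx2, hx3, hx4]
  star_mem' := by
    rintro x ⟨hxB, hx1, hx2, hx3, hx4⟩
    exact ⟨star_mem hxB, hx3, hx4, by simpa using hx1, by simpa using hx2⟩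

/-- Membership in `STA Ω`, relative to an ambient subalgebra `C` of `A`. -/
def MemSTA (Ω : Set (NonUnitalStarSubalgebra ℂ A)) (C : NonUnitalStarSubalgebra ℂ A) : Prop :=
  ∀ ε : ℝ, 0 < ε → ∀ F : Finset A, (F : Set A) ⊆ (C : Set A) →
    ∀ a y : A, a ∈ C → 0 ≤ a → a ≠ 0 → y ∈ C → 0 ≤ y →
      ∃ B ∈ Ω, B ≤ C ∧ IsClosed (B : Set A) ∧
        ∃ p ∈ B, IsProjection p ∧
          (∀ x ∈ F, ‖x * p - p * x‖ < ε) ∧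
          (∀ x ∈ F, ∃ b ∈ B, ‖p * x * p - b‖ < ε) ∧
          CuntzLEIn (C : Set A) (cutoff ε (y * y - y * p * y)) a

end Defs

section UnitalDefs

variable {A : Type*} [CStarAlgebra A] [PartialOrder A] [StarOrderedRing A]

/-- Membership in `TA Ω` for a unital C*-algebra. -/
def MemTA (Ω : Set (NonUnitalStarSubalgebra ℂ A)) : Prop :=
  ∀ ε : ℝ, 0 < ε → ∀ F : Finset A, ∀ a : A, 0 ≤ a → a ≠ 0 →
    ∃ (p : A) (B : NonUnitalStarSubalgebra ℂ A), IsProjection p ∧ B ∈ Ω ∧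
      IsClosed (B : Set A) ∧ p ∈ B ∧ (∀ b ∈ B, p * b = b ∧ b * p = b) ∧
      (∀ x ∈ F, ‖x * p - p * x‖ < ε) ∧
      (∀ x ∈ F, ∃ b ∈ B, ‖p * x * p - b‖ < ε) ∧
      CuntzLE (1 - p) a

/-- A unital C*-algebra is tracially 𝒵-absorbing in the unital sense. -/
def TraciallyZAbsorbingUnital (A : Type*) [CStarAlgebra A] [PartialOrder A]
    [StarOrderedRing A] : Prop :=
  IsEmpty (A ≃⋆ₐ[ℂ] ℂ) ∧
    ∀ (F : Finset A) (ε : ℝ), 0 < ε → ∀ a : A, 0 ≤ a → a ≠ 0 →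
      ∀ n : ℕ, 0 < n →
        ∃ ψ : Matrix (Fin n) (Fin n) ℂ →ₗ[ℂ] A, IsOrderZeroCPCInto Set.univ ψ ∧
          CuntzLE (1 - ψ 1) a ∧
          ∀ x : Matrix (Fin n) (Fin n) ℂ, ‖x‖ = 1 → ∀ y ∈ F, ‖ψ x * y - y * ψ x‖ < ε

end UnitalDefs

section MyAux
set_option linter.unusedSectionVars false
open Polynomial

variable {A : Type*} [CStarAlgebra A] [PartialOrder A] [StarOrderedRing A]

lemma myCuntzLE_conj {x a : A} (h : CuntzLE x a) (c : A) : CuntzLE (c * x * star c) a := by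
  obtain ⟨v, hv⟩ := h
  refine ⟨fun n => c * v n, ?_⟩
  have key : ∀ n, c * v n * a * star (c * v n) - c * x * star c
      = c * (v n * a * star (v n) - x) * star c := by
    intro n
    simp only [star_mul]
    noncomm_ring
  simp only [key]
  have hle : ∀ n, ‖c * (v n * a * star (v n) - x) * star c‖
      ≤ ‖c‖ * ‖v n * a * star (v n) - x‖ * ‖c‖ := by
    intro n
    calc ‖c * (v n * a * star (v n) - x) * star c‖
        ≤ ‖c * (v n * a * star (v n) - x)‖ * ‖star c‖ := norm_mul_le _ _
      _ ≤ ‖c‖ * ‖v n * a * star (v n) - x‖ * ‖star c‖ := by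
          gcongr; exact norm_mul_le _ _
      _ = ‖c‖ * ‖v n * a * star (v n) - x‖ * ‖c‖ := by rw [norm_star]
  refine squeeze_zero (fun n => norm_nonneg _) hle ?_
  have := (hv.const_mul ‖c‖).mul_const ‖c‖
  simpa using this

lemma myCuntzLE_smul {x a : A} (r : ℝ) (hr : 0 ≤ r) (h : CuntzLE x a) : CuntzLE (r • x) a := by
  obtain ⟨v, hv⟩ := h
  refine ⟨fun n => Real.sqrt r • v n, ?_⟩
  have key : ∀ n, (Real.sqrt r • v n) * a * star (Real.sqrt r • v n) - r • x
      = r • (v n * a * star (v n) - x) := by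
    intro n
    rw [star_smul, star_trivial, smul_mul_assoc, smul_mul_assoc, mul_smul_comm, smul_smul,
      Real.mul_self_sqrt hr, smul_sub]
  simp only [key, norm_smul, Real.norm_eq_abs, abs_of_nonneg hr]
  simpa using hv.const_mul r

lemma myProj_norm_le_one {p : A} (hp : IsProjection p) : ‖p‖ ≤ 1 := by
  have h : ‖p‖ * ‖p‖ = ‖p‖ := by
    rw [← CStarRing.norm_star_mul_self, hp.1.star_eq, hp.2]
  nlinarith [norm_nonneg p]

lemma mySpectrum_idem {p : A} (hp : p * p = p) : spectrum ℝ p ⊆ {0, 1} := by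
  intro t ht
  have key := spectrum.subset_polynomial_aeval p (X ^ 2 - X : ℝ[X]) ⟨t, ht, rfl⟩
  have h2 : (aeval p) (X ^ 2 - X : ℝ[X]) = 0 := by
    simp [sq, hp]
  rw [h2] at key
  have h3 : t ^ 2 - t = 0 := by
    by_contra h
    have hne : eval t (X ^ 2 - X : ℝ[X]) ≠ 0 := by simpa using h
    have hunit : IsUnit (algebraMap ℝ A (eval t (X ^ 2 - X : ℝ[X])) - 0) := by
      rw [sub_zero]
      exact (IsUnit.mk0 _ hne).map (algebraMap ℝ A)
    exact (spectrum.mem_iff.mp key) hunit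
  have h4 : t * (t - 1) = 0 := by nlinarith [h3]
  have : t = 0 ∨ t = 1 := by
    rcases mul_eq_zero.mp h4 with h | h
    · exact Or.inl h
    · exact Or.inr (by linarith)
  simpa using this

lemma myQuasispectrum_proj {p : A} (hp : IsProjection p) :
    quasispectrum ℝ p ⊆ {0, 1} := by
  rw [quasispectrum_eq_spectrum_union_zero]
  rintro t (ht | ht)
  · exact mySpectrum_idem hp.2 ht
  · exact Or.inl ht

lemma myCutoff_proj {p : A} (hp : IsProjection p) {ε : ℝ} (hε0 : 0 < ε) (hε1 : ε < 1) :
    cutoff ε p = (1 - ε) • p := by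
  unfold cutoff
  rw [cfcₙ_congr (g := fun t : ℝ => (1 - ε) * t) ?_, cfcₙ_const_mul_id (1 - ε) p hp.1]
  intro t ht
  rcases myQuasispectrum_proj hp ht with h | h <;> subst h <;> simp <;> linarith

noncomputable def gfun (ε : ℝ) : ℝ → ℝ := fun t => Real.sqrt (max 0 (t - ε) / max ε t)

lemma gfun_cont {ε : ℝ} (hε : 0 < ε) : Continuous (gfun ε) := by
  apply Real.continuous_sqrt.comp
  apply Continuous.div
  · exact continuous_const.max (continuous_id.sub continuous_const)
  · exact continuous_const.max continuous_id
  · intro t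
    have : ε ≤ max ε t := le_max_left _ _
    positivity

lemma gfun_zero {ε : ℝ} (hε : 0 < ε) : gfun ε 0 = 0 := by
  unfold gfun
  rw [max_eq_left (by linarith : (0:ℝ) - ε ≤ 0), zero_div, Real.sqrt_zero]

lemma gfun_eq {ε : ℝ} (hε : 0 < ε) (t : ℝ) :
    gfun ε t * t * gfun ε t = max 0 (t - ε) := by
  unfold gfun
  rcases le_or_gt t ε with h | h
  · rw [max_eq_left (by linarith : t - ε ≤ 0), zero_div, Real.sqrt_zero]
    ring
  · have ht0 : 0 < t := lt_trans hε h
    rw [max_eq_right (le_of_lt h), max_eq_right (by linarith : (0:ℝ) ≤ t - ε)]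
    have hnn : 0 ≤ (t - ε) / t := div_nonneg (by linarith) ht0.le
    have hcomm : Real.sqrt ((t - ε) / t) * t * Real.sqrt ((t - ε) / t)
        = (Real.sqrt ((t - ε) / t) * Real.sqrt ((t - ε) / t)) * t := by ring
    rw [hcomm, Real.mul_self_sqrt hnn, div_mul_cancel₀ _ (ne_of_gt ht0)]

lemma myCutoff_eq_conj {ε : ℝ} (hε : 0 < ε) (z : A) (hz : IsSelfAdjoint z) :
    cutoff ε z = cfcₙ (gfun ε) z * z * cfcₙ (gfun ε) z := by
  have hc : ContinuousOn (gfun ε) (quasispectrum ℝ z) := (gfun_cont hε).continuousOn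
  have h0 := gfun_zero hε
  calc cutoff ε z = cfcₙ (fun t : ℝ => gfun ε t * t * gfun ε t) z := by
        unfold cutoff
        exact cfcₙ_congr fun t _ => (gfun_eq hε t).symm
    _ = cfcₙ (fun t : ℝ => gfun ε t * t) z * cfcₙ (gfun ε) z := by
        rw [cfcₙ_mul _ _ z (by fun_prop) (by simp [h0]) hc h0]
    _ = cfcₙ (gfun ε) z * cfcₙ (fun t : ℝ => t) z * cfcₙ (gfun ε) z := by
        rw [cfcₙ_mul _ _ z hc h0 (by fun_prop) rfl]
    _ = cfcₙ (gfun ε) z * z * cfcₙ (gfun ε) z := by rw [cfcₙ_id' ℝ z]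

lemma gfun_selfAdjoint (ε : ℝ) (z : A) : IsSelfAdjoint (cfcₙ (gfun ε) z) :=
  cfcₙ_predicate _ _

end MyAux


/-- If Ω is closed under passing to unital hereditary C*-subalgebras and A is a
unital simple C*-algebra, then A ∈ TAΩ if and only if A ∈ STAΩ. -/
theorem stmt2 {A : Type*} [CStarAlgebra A] [PartialOrder A] [StarOrderedRing A]
    (Ω : Set (NonUnitalStarSubalgebra ℂ A))
    (hΩ : ∀ B ∈ Ω, ∀ p ∈ B, IsProjection p → corner p B ∈ Ω)
    (hsimple : IsSimpleCStarAlgebra A) :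
    MemTA Ω ↔ MemSTA Ω (⊤ : NonUnitalStarSubalgebra ℂ A) := by
  constructor
  · -- TA → STA
    intro hTA ε hε F _hF a y _haC ha ha0 _hyC hy
    obtain ⟨p, B, hproj, hBΩ, hBclosed, hpB, _hunit, hcomm, happrox, hcuntz⟩ :=
      hTA ε hε F a ha ha0
    refine ⟨B, hBΩ, le_top, hBclosed, p, hpB, hproj, hcomm, happrox, ?_⟩
    have hysa : star y = y := (IsSelfAdjoint.of_nonneg hy).star_eq
    have hz : y * y - y * p * y = y * (1 - p) * y := by noncomm_ring
    have hzsa : IsSelfAdjoint (y * (1 - p) * y) := by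
      rw [IsSelfAdjoint]
      simp [star_mul, star_sub, hproj.1.star_eq, hysa, mul_assoc]
    have hgsa : star (cfcₙ (gfun ε) (y * (1 - p) * y)) = cfcₙ (gfun ε) (y * (1 - p) * y) :=
      (gfun_selfAdjoint ε _).star_eq
    have hcut : cutoff ε (y * y - y * p * y) = (cfcₙ (gfun ε) (y * (1 - p) * y) * y) * (1 - p)
        * star (cfcₙ (gfun ε) (y * (1 - p) * y) * y) := by
      rw [hz, star_mul, hgsa, hysa, myCutoff_eq_conj hε _ hzsa]
      simp only [mul_assoc]
    rw [hcut]
    obtain ⟨v, hv⟩ := myCuntzLE_conj hcuntz (cfcₙ (gfun ε) (y * (1 - p) * y) * y)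
    exact ⟨v, fun n => by simp, hv⟩
  · -- STA → TA
    intro hSTA ε hε F a ha ha0
    set ε' := min ε (1/2) with hε'def
    have hε' : 0 < ε' := lt_min hε (by norm_num)
    have hε'le : ε' ≤ ε := min_le_left _ _
    have hε'lt1 : ε' < 1 := lt_of_le_of_lt (min_le_right _ _) (by norm_num)
    have h1nonneg : (0 : A) ≤ 1 := by simpa using star_mul_self_nonneg (1 : A)
    obtain ⟨B, hBΩ, _, hBclosed, p, hpB, hproj, hcomm, happrox, hcuntz⟩ :=
      hSTA ε' hε' F (by intro x _; simp) a 1 (by simp) ha ha0 (by simp) h1nonneg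
    have hqproj : IsProjection (1 - p) := by
      refine ⟨(IsSelfAdjoint.one (R := A)).sub hproj.1, ?_⟩
      rw [mul_sub, mul_one, sub_mul, one_mul, hproj.2, sub_self, sub_zero]
    have hcuntz' : CuntzLE (1 - p) a := by
      simp only [one_mul, mul_one] at hcuntz
      obtain ⟨v, _, hv⟩ := hcuntz
      have hc1 : CuntzLE (cutoff ε' (1 - p)) a := ⟨v, hv⟩
      rw [myCutoff_proj hqproj hε' hε'lt1] at hc1
      have hc2 := myCuntzLE_smul (1 - ε')⁻¹ (inv_nonneg.mpr (by linarith)) hc1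
      rwa [smul_smul, inv_mul_cancel₀ (by linarith), one_smul] at hc2
    refine ⟨p, corner p B, hproj, hΩ B hBΩ p hpB hproj, ?_, ?_, ?_, ?_, ?_, hcuntz'⟩
    · -- closed
      have hset : (corner p B : Set A) = {x : A | x ∈ B} ∩ ({x : A | p * x = x} ∩
          ({x : A | x * p = x} ∩ ({x : A | p * star x = star x} ∩
          {x : A | star x * p = star x}))) := by
        ext x
        simp only [Set.mem_inter_iff, Set.mem_setOf_eq]
        exact Iff.rfl
      rw [hset]
      refine hBclosed.inter (IsClosed.inter ?_ (IsClosed.inter ?_ (IsClosed.inter ?_ ?_)))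
      · exact isClosed_eq (continuous_const.mul continuous_id) continuous_id
      · exact isClosed_eq (continuous_id.mul continuous_const) continuous_id
      · exact isClosed_eq (continuous_const.mul continuous_star) continuous_star
      · exact isClosed_eq (continuous_star.mul continuous_const) continuous_star
    · -- p ∈ corner
      exact ⟨hpB, hproj.2, hproj.2, by rw [hproj.1.star_eq]; exact hproj.2,
        by rw [hproj.1.star_eq]; exact hproj.2⟩
    · -- unit
      intro b hb
      exact ⟨hb.2.1, hb.2.2.1⟩
    · -- commutator
      intro x hx
      exact lt_of_lt_of_le (hcomm x hx) hε'le
    · -- approx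
      intro x hx
      obtain ⟨b, hbB, hb⟩ := happrox x hx
      have hstar : star (p * b * p) = p * star b * p := by
        simp [star_mul, hproj.1.star_eq, mul_assoc]
      refine ⟨p * b * p, ⟨mul_mem (mul_mem hpB hbB) hpB, ?_, ?_, ?_, ?_⟩, ?_⟩
      · simp only [← mul_assoc, hproj.2]
      · simp only [mul_assoc, hproj.2]
      · rw [hstar]; simp only [← mul_assoc, hproj.2]
      · rw [hstar]; simp only [mul_assoc, hproj.2]
      · have heq : p * (p * x * p - b) * p = p * x * p - p * b * p := by
          have h1 : p * x * p * p = p * x * p := by rw [mul_assoc, hproj.2]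
          simp only [mul_sub, sub_mul, ← mul_assoc, hproj.2, h1]
        calc ‖p * x * p - p * b * p‖ = ‖p * (p * x * p - b) * p‖ := by rw [heq]
          _ ≤ ‖p * (p * x * p - b)‖ * ‖p‖ := norm_mul_le _ _
          _ ≤ ‖p‖ * ‖p * x * p - b‖ * ‖p‖ := by gcongr; exact norm_mul_le _ _
          _ ≤ 1 * ‖p * x * p - b‖ * 1 := by
              gcongr <;> exact myProj_norm_le_one hproj
          _ = ‖p * x * p - b‖ := by ring
          _ < ε' := hb
          _ ≤ ε := hε'le
end

section
/- Let Ω be a class of C*-algebras and let A be a unital simple C*-algebra. If A belongs to TAΩ, then A belongs to STAΩ. -/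
open Filter Topology
open scoped Matrix.Norms.L2Operator

section Aux

variable {A : Type*} [NonUnitalCStarAlgebra A] [PartialOrder A] [StarOrderedRing A]

omit [PartialOrder A] [StarOrderedRing A] in
lemma exists_cutoff_factor (ε : ℝ) (hε : 0 < ε) (x : A) (hx : IsSelfAdjoint x) :
    ∃ d : A, IsSelfAdjoint d ∧ d * x * d = cutoff ε x := by
  set f : ℝ → ℝ := fun t => Real.sqrt (max 0 (t - ε) / t) with hf
  have hf0 : f 0 = 0 := by simp [hf]
  have hfball : ∀ s : ℝ, |s| < ε → f s = 0 := by
    intro s hs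
    have : max 0 (s - ε) = 0 := max_eq_left (by linarith [(abs_lt.mp hs).2])
    simp [hf, this]
  have hfc : Continuous f := by
    rw [continuous_iff_continuousAt]
    intro t
    rcases eq_or_ne t 0 with rfl | ht
    · rw [ContinuousAt, hf0]
      have hev : (fun _ : ℝ => (0:ℝ)) =ᶠ[nhds (0:ℝ)] f := by
        filter_upwards [Metric.ball_mem_nhds (0:ℝ) hε] with s hs
        simp only [Metric.mem_ball, Real.dist_eq, sub_zero] at hs
        exact (hfball s hs).symm
      exact tendsto_const_nhds.congr' hev
    · exact (Real.continuous_sqrt.continuousAt.comp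
        (((continuous_const.max (continuous_id.sub continuous_const)).continuousAt).div
          continuousAt_id ht))
  refine ⟨cfcₙ f x, cfcₙ_predicate f x, ?_⟩
  have key : (fun t : ℝ => f t * t * f t) = fun t : ℝ => max 0 (t - ε) := by
    funext t
    rcases eq_or_ne t 0 with rfl | ht
    · simp [hf0, max_eq_left (by linarith : -ε ≤ 0)]
    · have hnn : 0 ≤ max 0 (t - ε) / t := by
        rcases lt_or_gt_of_ne ht with h | h
        · have : max 0 (t - ε) = 0 := max_eq_left (by linarith)
          simp [this]
        · exact div_nonneg (le_max_left _ _) h.le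
      have hsq : f t * f t = max 0 (t - ε) / t := Real.mul_self_sqrt hnn
      calc f t * t * f t = (f t * f t) * t := by ring
        _ = (max 0 (t - ε) / t) * t := by rw [hsq]
        _ = max 0 (t - ε) := div_mul_cancel₀ _ ht
  rw [cutoff, ← key,
    show (fun t : ℝ => f t * t * f t) = fun t => f t * (t * f t) by funext t; ring,
    cfcₙ_mul f (fun t => t * f t) x hfc.continuousOn (by simp [hf0])
      ((continuous_id.mul hfc).continuousOn) (by simp [hf0]),
    cfcₙ_mul (fun t : ℝ => t) f x continuous_id.continuousOn rfl hfc.continuousOn hf0,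
    cfcₙ_id' ℝ x, ← mul_assoc]

end Aux

/-- If A is a unital simple C*-algebra in TAΩ, then A ∈ STAΩ. -/
theorem stmt3 {A : Type*} [CStarAlgebra A] [PartialOrder A] [StarOrderedRing A]
    (Ω : Set (NonUnitalStarSubalgebra ℂ A))
    (hsimple : IsSimpleCStarAlgebra A)
    (hA : MemTA Ω) :
    MemSTA Ω (⊤ : NonUnitalStarSubalgebra ℂ A) := by
  intro ε hε F _hF a y _haC ha0 hane _hyC hy0
  obtain ⟨p, B, hproj, hBΩ, hBclosed, hpB, _hBunit, hcomm, happrox, hCuntz⟩ :=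
    hA ε hε F a ha0 hane
  obtain ⟨hpsa, hpidem⟩ := hproj
  refine ⟨B, hBΩ, le_top, hBclosed, p, hpB, ⟨hpsa, hpidem⟩, hcomm, happrox, ?_⟩
  have hysa : IsSelfAdjoint y := .of_nonneg hy0
  have hqsa : IsSelfAdjoint ((1 : A) - p) := by
    rw [IsSelfAdjoint, star_sub, star_one, hpsa.star_eq]
  have hq2 : ((1 : A) - p) * (1 - p) = 1 - p := by
    simp only [mul_sub, sub_mul, one_mul, mul_one, hpidem]; abel
  have hq3 : ((1 : A) - p) * (1 - p) * (1 - p) = 1 - p := by rw [hq2, hq2]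
  have hxsa : IsSelfAdjoint (y * (1 - p) * y) := by
    rw [IsSelfAdjoint, star_mul, star_mul, hysa.star_eq, hqsa.star_eq, mul_assoc]
  have hrw : y * y - y * p * y = y * (1 - p) * y := by
    simp only [mul_sub, sub_mul, mul_one, one_mul]
  obtain ⟨d, hdsa, hdxd⟩ := exists_cutoff_factor ε hε (y * (1 - p) * y) hxsa
  obtain ⟨v, hv⟩ := hCuntz
  have hsu : star (y * (1 - p)) = (1 - p) * y := by
    rw [star_mul, hqsa.star_eq, hysa.star_eq]
  have htarget : d * (y * (1 - p)) * ((1 - p) * (star (y * (1 - p)) * d))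
      = cutoff ε (y * y - y * p * y) := by
    rw [hsu, hrw, ← hdxd]
    calc d * (y * (1 - p)) * ((1 - p) * ((1 - p) * y * d))
        = d * (y * ((1 - p) * (1 - p) * (1 - p)) * y) * d := by noncomm_ring
      _ = d * (y * (1 - p) * y) * d := by rw [hq3]
  refine ⟨fun n => d * (y * (1 - p)) * v n, fun n => trivial, ?_⟩
  have hdiff : ∀ n, (d * (y * (1 - p)) * v n) * a * star (d * (y * (1 - p)) * v n)
      - cutoff ε (y * y - y * p * y)
      = (d * (y * (1 - p))) * ((v n * a * star (v n) - (1 - p))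
          * (star (y * (1 - p)) * d)) := by
    intro n
    rw [star_mul, star_mul, hdsa.star_eq, ← htarget]
    noncomm_ring
  have hbound : ∀ n, ‖(d * (y * (1 - p)) * v n) * a * star (d * (y * (1 - p)) * v n)
      - cutoff ε (y * y - y * p * y)‖
      ≤ ‖d * (y * (1 - p))‖ * (‖v n * a * star (v n) - (1 - p)‖
          * ‖star (y * (1 - p)) * d‖) := by
    intro n
    rw [hdiff n]
    exact (norm_mul_le _ _).trans (mul_le_mul_of_nonneg_left (norm_mul_le _ _)
      (norm_nonneg _))
  have hlim : Tendsto (fun n => ‖d * (y * (1 - p))‖ * (‖v n * a * star (v n) - (1 - p)‖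
      * ‖star (y * (1 - p)) * d‖)) atTop (nhds 0) := by
    have := (hv.mul_const ‖star (y * (1 - p)) * d‖).const_mul ‖d * (y * (1 - p))‖
    simpa using this
  exact squeeze_zero (fun n => norm_nonneg _) hbound hlim
end

section
/- Let Ω be a class of C*-algebras that is closed under passing to unital hereditary C*-subalgebras, and let A be a unital simple C*-algebra. If A belongs to STAΩ, then A belongs to TAΩ. -/
open Filter Topology
open scoped Matrix.Norms.L2Operator

section AuxStmt4

variable {A : Type*} [CStarAlgebra A] [PartialOrder A] [StarOrderedRing A]

lemma stmt4_proj_spectrum {q : A} (hq : q * q = q) : spectrum ℝ q ⊆ {0, 1} := by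
  intro t ht
  by_contra hmem
  simp only [Set.mem_insert_iff, Set.mem_singleton_iff, not_or] at hmem
  obtain ⟨ht0, ht1⟩ := hmem
  apply spectrum.notMem_iff.mpr ?_ ht
  rw [Algebra.algebraMap_eq_smul_one]
  set d : ℝ := (t * (t - 1))⁻¹ with hd
  have hden : t * (t - 1) ≠ 0 := by
    intro h; rcases mul_eq_zero.mp h with h | h
    · exact ht0 h
    · exact ht1 (by linarith [sub_eq_zero.mp h])
  have hc1 : t * t⁻¹ = 1 := mul_inv_cancel₀ ht0
  have hc2 : t * d - t⁻¹ - d = 0 := by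
    field_simp [hd]
    linear_combination (inv_mul_cancel₀ hden : (t * (t - 1))⁻¹ * (t * (t - 1)) = 1)
  have expand1 : (t • (1:A) - q) * (t⁻¹ • 1 + d • q)
      = (t * t⁻¹) • 1 + (t * d - t⁻¹ - d) • q := by
    simp only [sub_mul, mul_add, add_mul, smul_mul_assoc, mul_smul_comm, smul_smul,
      one_mul, mul_one, hq]
    module
  have expand2 : (t⁻¹ • 1 + d • q) * (t • (1:A) - q)
      = (t * t⁻¹) • 1 + (t * d - t⁻¹ - d) • q := by
    simp only [sub_mul, mul_sub, mul_add, add_mul, smul_mul_assoc, mul_smul_comm, smul_smul,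
      one_mul, mul_one, hq]
    module
  have h1 : (t • (1:A) - q) * (t⁻¹ • 1 + d • q) = 1 := by
    rw [expand1, hc1, hc2, zero_smul, add_zero, one_smul]
  have h2 : (t⁻¹ • 1 + d • q) * (t • (1:A) - q) = 1 := by
    rw [expand2, hc1, hc2, zero_smul, add_zero, one_smul]
  exact ⟨⟨_, _, h1, h2⟩, rfl⟩

lemma stmt4_cutoff_proj {q : A} (hsa : IsSelfAdjoint q) (hq : q * q = q) {ε : ℝ}
    (hε : 0 < ε) (hε1 : ε < 1) :
    cutoff ε q = (1 - ε) • q := by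
  unfold cutoff
  have h1 : cfcₙ (fun t : ℝ => max 0 (t - ε)) q = cfcₙ (fun t : ℝ => (1 - ε) • t) q := by
    apply cfcₙ_congr
    intro t ht
    rw [quasispectrum_eq_spectrum_union_zero] at ht
    rcases ht with h | h
    · rcases stmt4_proj_spectrum hq h with h | h
      · simp [Set.mem_singleton_iff.mp h, le_of_lt hε]
      · simp only [Set.mem_singleton_iff] at h
        subst h
        simp only [smul_eq_mul, mul_one]
        rw [max_eq_right (by linarith)]
    · simp only [Set.mem_singleton_iff] at h
      subst h
      simp [le_of_lt hε]
  rw [h1, cfcₙ_smul_id (1 - ε) q]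

end AuxStmt4

/-- If Ω is closed under passing to unital hereditary C*-subalgebras and A is a
unital simple C*-algebra in STAΩ, then A ∈ TAΩ. -/
theorem stmt4 {A : Type*} [CStarAlgebra A] [PartialOrder A] [StarOrderedRing A]
    (Ω : Set (NonUnitalStarSubalgebra ℂ A))
    (hΩ : ∀ B ∈ Ω, ∀ p ∈ B, IsProjection p → corner p B ∈ Ω)
    (hsimple : IsSimpleCStarAlgebra A)
    (hA : MemSTA Ω (⊤ : NonUnitalStarSubalgebra ℂ A)) :
    MemTA Ω := by
  intro ε hε F a ha hane
  set ε' : ℝ := min ε (1/2) with hε'def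
  have hε'pos : 0 < ε' := lt_min hε (by norm_num)
  have hε'le : ε' ≤ ε := min_le_left _ _
  have hε'lt1 : ε' < 1 := lt_of_le_of_lt (min_le_right _ _) (by norm_num)
  obtain ⟨B, hBΩ, -, hBcl, p, hpB, hpproj, hcomm, happrox, hcz⟩ :=
    hA ε' hε'pos F (by simp) a 1 (NonUnitalStarAlgebra.mem_top) ha hane
      (NonUnitalStarAlgebra.mem_top) zero_le_one
  obtain ⟨hpsa, hpp⟩ := hpproj
  have hsp : star p = p := hpsa.star_eq
  have hpnorm : ‖p‖ ≤ 1 := by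
    by_cases h : p = 0
    · simp [h]
    · have h2 : ‖p‖ * ‖p‖ = ‖p‖ := by
        rw [← CStarRing.norm_star_mul_self, hsp, hpp]
      nlinarith [norm_pos_iff.mpr h]
  refine ⟨p, corner p B, ⟨hpsa, hpp⟩, hΩ B hBΩ p hpB ⟨hpsa, hpp⟩, ?_, ?_, ?_, ?_, ?_, ?_⟩
  · -- closedness of the corner
    have hset : (corner p B : Set A) = (B : Set A) ∩ {x | p * x = x} ∩ {x | x * p = x}
        ∩ {x | p * star x = star x} ∩ {x | star x * p = star x} := by
      ext x
      constructor
      · rintro ⟨h1, h2, h3, h4, h5⟩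
        exact ⟨⟨⟨⟨h1, h2⟩, h3⟩, h4⟩, h5⟩
      · rintro ⟨⟨⟨⟨h1, h2⟩, h3⟩, h4⟩, h5⟩
        exact ⟨h1, h2, h3, h4, h5⟩
    rw [hset]
    refine ((((hBcl.inter ?_).inter ?_).inter ?_).inter ?_) <;>
      exact isClosed_eq (by fun_prop) (by fun_prop)
  · -- p ∈ corner p B
    exact ⟨hpB, hpp, hpp, by rw [hsp]; exact hpp, by rw [hsp]; exact hpp⟩
  · -- p is a unit for corner p B
    intro b hb
    exact ⟨hb.2.1, hb.2.2.1⟩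
  · -- commutators
    intro x hx
    exact lt_of_lt_of_le (hcomm x hx) hε'le
  · -- approximation by elements of the corner
    intro x hx
    obtain ⟨b, hbB, hb⟩ := happrox x hx
    refine ⟨p * b * p, ?_, ?_⟩
    · refine ⟨mul_mem (mul_mem hpB hbB) hpB, ?_, ?_, ?_, ?_⟩
      · simp only [← mul_assoc]; rw [hpp]
      · rw [mul_assoc, hpp]
      · have h3 : star (p * b * p) = p * star b * p := by
          simp [star_mul, hsp, mul_assoc]
        rw [h3]
        simp only [← mul_assoc]; rw [hpp]
      · have h3 : star (p * b * p) = p * star b * p := by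
          simp [star_mul, hsp, mul_assoc]
        rw [h3, mul_assoc, hpp]
    · have key : p * (p * x * p - b) * p = p * x * p - p * b * p := by
        simp only [mul_sub, sub_mul]
        congr 1
        simp only [← mul_assoc]
        rw [hpp, mul_assoc, hpp]
      calc ‖p * x * p - p * b * p‖ = ‖p * (p * x * p - b) * p‖ := by rw [key]
        _ ≤ ‖p * (p * x * p - b)‖ * ‖p‖ := norm_mul_le _ _
        _ ≤ (‖p‖ * ‖p * x * p - b‖) * ‖p‖ :=
            mul_le_mul_of_nonneg_right (norm_mul_le _ _) (norm_nonneg p)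
        _ ≤ ‖p * x * p - b‖ * 1 :=
            mul_le_mul (mul_le_of_le_one_left (norm_nonneg _) hpnorm) hpnorm
              (norm_nonneg p) (norm_nonneg _)
        _ = ‖p * x * p - b‖ := mul_one _
        _ < ε' := hb
        _ ≤ ε := hε'le
  · -- the Cuntz comparison
    have h11 : (1:A) * 1 - 1 * p * 1 = 1 - p := by rw [one_mul, one_mul, mul_one]
    rw [h11] at hcz
    have hqsa : IsSelfAdjoint ((1:A) - p) := (IsSelfAdjoint.one A).sub hpsa
    have hqq : ((1:A) - p) * (1 - p) = 1 - p := by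
      have : ((1:A) - p) * (1 - p) = 1 - p - p + p * p := by noncomm_ring
      rw [this, hpp]; abel
    obtain ⟨v, -, hv⟩ := hcz
    have hr1 : 0 < 1 - ε' := by linarith
    set r : ℝ := (1 - ε')⁻¹ with hrdef
    have hrpos : 0 < r := inv_pos.mpr hr1
    refine ⟨fun n => ((Real.sqrt r : ℝ) : ℂ) • v n, ?_⟩
    have hkey : ∀ n, ((Real.sqrt r : ℝ) : ℂ) • v n * a * star (((Real.sqrt r : ℝ) : ℂ) • v n)
        - (1 - p) = (r : ℂ) • (v n * a * star (v n) - cutoff ε' (1 - p)) := by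
      intro n
      have hs : star (((Real.sqrt r : ℝ) : ℂ) • v n) = ((Real.sqrt r : ℝ) : ℂ) • star (v n) := by
        simp [star_smul, Complex.conj_ofReal]
      rw [hs]
      have hprod : ((Real.sqrt r : ℝ) : ℂ) • v n * a * (((Real.sqrt r : ℝ) : ℂ) • star (v n))
          = (r : ℂ) • (v n * a * star (v n)) := by
        rw [smul_mul_assoc, smul_mul_assoc, mul_smul_comm, smul_smul]
        congr 1
        rw [← Complex.ofReal_mul, Real.mul_self_sqrt hrpos.le]
      rw [hprod, smul_sub]
      congr 1
      rw [stmt4_cutoff_proj hqsa hqq hε'pos hε'lt1, Complex.coe_smul, smul_smul,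
        hrdef, inv_mul_cancel₀ hr1.ne', one_smul]
    have heq : (fun n => ‖((Real.sqrt r : ℝ) : ℂ) • v n * a
        * star (((Real.sqrt r : ℝ) : ℂ) • v n) - (1 - p)‖)
        = fun n => r * ‖v n * a * star (v n) - cutoff ε' (1 - p)‖ := by
      funext n
      rw [hkey n, norm_smul]
      simp [abs_of_pos hrpos]
    rw [heq]
    simpa using hv.const_mul r
end

section
/- Let A be a C*-algebra, let b ∈ A be a positive element, let p ∈ A be a projection, and let c ∈ A be a positive element with c ≤ p. Let ε ≥ ε' > 0, and let d₁, d₂ ∈ A be positive elements with d₁d₂ = 0. If (b² − bpb − ε')_+ ≾ d₁ and p − c ≾ d₂, then (b² − bcb − 2ε)_+ ≾ d₁ + d₂ in the sense of Cuntz subequivalence. -/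
open Filter Topology
open scoped Matrix.Norms.L2Operator

open scoped CStarAlgebra

section Unital
variable {E : Type*} [CStarAlgebra E] [PartialOrder E] [StarOrderedRing E]

def CLE' (a b : E) : Prop := ∀ ε : ℝ, 0 < ε → ∃ v : E, ‖v * b * star v - a‖ < ε

namespace CLEAux

lemma den_pos {s : ℝ} (hs : 0 < s) (t : ℝ) : 0 < max t 0 + s := by
  have := le_max_right t 0; linarith

lemma cont_den {s : ℝ} (hs : 0 < s) : Continuous (fun t : ℝ => max t 0 + s) := by fun_prop

lemma cont_n {s : ℝ} (hs : 0 < s) :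
    Continuous (fun t : ℝ => (Real.sqrt (max t 0 + s))⁻¹) :=
  (Real.continuous_sqrt.comp (cont_den hs)).inv₀
    fun t => (Real.sqrt_pos.mpr (den_pos hs t)).ne'

lemma cont_m {s : ℝ} (hs : 0 < s) :
    Continuous (fun t : ℝ => max t 0 * (max t 0 + s)⁻¹) :=
  (by fun_prop : Continuous fun t : ℝ => max t 0).mul <|
    (cont_den hs).inv₀ fun t => (den_pos hs t).ne'

lemma norm_conj_le {F : Type*} [NonUnitalNormedRing F] [StarRing F] [NormedStarGroup F]
    (g m : F) : ‖g * m * star g‖ ≤ ‖g‖ * ‖m‖ * ‖g‖ := by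
  calc ‖g * m * star g‖ ≤ ‖g * m‖ * ‖star g‖ := norm_mul_le _ _
    _ ≤ ‖g‖ * ‖m‖ * ‖star g‖ := by gcongr; exact norm_mul_le _ _
    _ = ‖g‖ * ‖m‖ * ‖g‖ := by rw [norm_star]

lemma cont_phi {s : ℝ} (hs : 0 < s) :
    Continuous (fun t : ℝ => s * (max t 0 + s)⁻¹) :=
  continuous_const.mul <| (cont_den hs).inv₀ fun t => (den_pos hs t).ne'

/-- Conjugation of `Y` by `cfc g Y` as a single `cfc`. -/
lemma conj_cfc (Y : E) (hY : 0 ≤ Y) (g : ℝ → ℝ) (hg : Continuous g) :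
    cfc g Y * Y * cfc g Y = cfc (fun t : ℝ => g t * t * g t) Y := by
  have h1 : cfc (fun t : ℝ => g t * t * g t) Y
      = cfc (fun t : ℝ => g t * t) Y * cfc g Y :=
    cfc_mul _ _ Y ((hg.mul continuous_id).continuousOn) hg.continuousOn
  have h2 : cfc (fun t : ℝ => g t * t) Y = cfc g Y * cfc (fun t : ℝ => t) Y :=
    cfc_mul _ _ Y hg.continuousOn continuous_id.continuousOn
  rw [h1, h2, cfc_id' ℝ Y]

lemma keyBound (Y u : E) (hY : 0 ≤ Y) (huY : u * star u ≤ Y) {s : ℝ} (hs : 0 < s) :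
    ‖star u * cfc (fun t : ℝ => s * (max t 0 + s)⁻¹) Y * u‖ ≤ s := by
  set ψ : ℝ → ℝ := fun t => Real.sqrt (s * (max t 0 + s)⁻¹) with hψ
  have hψc : Continuous ψ := Real.continuous_sqrt.comp (cont_phi hs)
  have hq : cfc ψ Y * cfc ψ Y = cfc (fun t : ℝ => s * (max t 0 + s)⁻¹) Y := by
    rw [← cfc_mul _ _ Y hψc.continuousOn hψc.continuousOn]
    exact cfc_congr fun t _ => Real.mul_self_sqrt
      (mul_nonneg hs.le (inv_nonneg.mpr (den_pos hs t).le))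
  have hψsa : IsSelfAdjoint (cfc ψ Y) := cfc_predicate _ Y
  set z := cfc ψ Y * u with hz
  have h1 : star u * cfc (fun t : ℝ => s * (max t 0 + s)⁻¹) Y * u = star z * z := by
    rw [hz, star_mul, hψsa.star_eq, ← hq]; simp [mul_assoc]
  have h3 : z * star z ≤ cfc ψ Y * Y * cfc ψ Y := by
    have h2 : z * star z = cfc ψ Y * (u * star u) * cfc ψ Y := by
      rw [hz, star_mul, hψsa.star_eq]; simp [mul_assoc]
    rw [h2]; exact IsSelfAdjoint.conjugate_le_conjugate huY hψsa
  have h4 : ‖star z * z‖ = ‖z * star z‖ := by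
    rw [CStarRing.norm_star_mul_self, CStarRing.norm_self_mul_star]
  have h5 : ‖z * star z‖ ≤ ‖cfc ψ Y * Y * cfc ψ Y‖ :=
    CStarAlgebra.norm_le_norm_of_nonneg_of_le (mul_star_self_nonneg z) h3
  have h7 : ‖cfc (fun t : ℝ => ψ t * t * ψ t) Y‖ ≤ s := by
    apply norm_cfc_le hs.le
    intro t ht
    have ht0 : 0 ≤ t := spectrum_nonneg_of_nonneg hY ht
    have hd := den_pos hs t
    have hψ2 : ψ t * ψ t = s * (max t 0 + s)⁻¹ :=
      Real.mul_self_sqrt (mul_nonneg hs.le (inv_nonneg.mpr hd.le))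
    have he : ψ t * t * ψ t = s * (t * (max t 0 + s)⁻¹) := by
      have h8 : ψ t * t * ψ t = ψ t * ψ t * t := by ring
      rw [h8, hψ2]; ring
    rw [he, Real.norm_eq_abs, abs_of_nonneg (by positivity)]
    have h9 : t * (max t 0 + s)⁻¹ ≤ 1 := by
      rw [← div_eq_mul_inv, div_le_one hd]
      have := le_max_left t 0; linarith
    nlinarith
  rw [h1, h4]
  exact h5.trans (by rw [conj_cfc Y hY ψ hψc]; exact h7)

/-- `‖u* (cfc m Y) u - u* u‖ ≤ s` when `u u* ≤ Y`. -/
lemma approx (Y u : E) (hY : 0 ≤ Y) (huY : u * star u ≤ Y) {s : ℝ} (hs : 0 < s) :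
    ‖star u * cfc (fun t : ℝ => max t 0 * (max t 0 + s)⁻¹) Y * u - star u * u‖ ≤ s := by
  have hone : cfc (fun t : ℝ => s * (max t 0 + s)⁻¹) Y
      + cfc (fun t : ℝ => max t 0 * (max t 0 + s)⁻¹) Y = 1 := by
    rw [← cfc_add Y _ _ (cont_phi hs).continuousOn (cont_m hs).continuousOn]
    rw [← cfc_one (R := ℝ) Y]
    apply cfc_congr
    intro t _
    field_simp
    simp only [Pi.one_apply]
    ring
  have key : star u * cfc (fun t : ℝ => max t 0 * (max t 0 + s)⁻¹) Y * u - star u * u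
      = -(star u * cfc (fun t : ℝ => s * (max t 0 + s)⁻¹) Y * u) := by
    have : cfc (fun t : ℝ => max t 0 * (max t 0 + s)⁻¹) Y
        = 1 - cfc (fun t : ℝ => s * (max t 0 + s)⁻¹) Y := by
      rw [← hone]; abel
    rw [this]; noncomm_ring
  rw [key, norm_neg]
  exact keyBound Y u hY huY hs

/-- square root via cfc -/
lemma sqrt_mul_sqrt_cfc (a : E) (ha : 0 ≤ a) :
    cfc Real.sqrt a * cfc Real.sqrt a = a := by
  rw [← cfc_mul _ _ a Real.continuous_sqrt.continuousOn Real.continuous_sqrt.continuousOn]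
  conv_rhs => rw [← cfc_id ℝ a]
  exact cfc_congr fun t ht => Real.mul_self_sqrt (spectrum_nonneg_of_nonneg ha ht)

lemma orth_sqrt {a b : E} (ha : 0 ≤ a) (h : a * b = 0) : cfc Real.sqrt a * b = 0 := by
  have h1 : star (cfc Real.sqrt a * b) * (cfc Real.sqrt a * b) = 0 := by
    have hsa : IsSelfAdjoint (cfc Real.sqrt a) := cfc_predicate _ a
    calc star (cfc Real.sqrt a * b) * (cfc Real.sqrt a * b)
        = star b * (cfc Real.sqrt a * cfc Real.sqrt a) * b := by
          rw [star_mul, hsa.star_eq]; simp [mul_assoc]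
      _ = star b * (a * b) := by rw [sqrt_mul_sqrt_cfc a ha]; simp [mul_assoc]
      _ = 0 := by rw [h, mul_zero]
  have h2 : ‖cfc Real.sqrt a * b‖ * ‖cfc Real.sqrt a * b‖ = 0 := by
    rw [← CStarRing.norm_star_mul_self, h1, norm_zero]
  exact norm_eq_zero.mp (mul_self_eq_zero.mp h2)

lemma nsYns (Y : E) (hY : 0 ≤ Y) {s : ℝ} (hs : 0 < s) :
    cfc (fun t : ℝ => (Real.sqrt (max t 0 + s))⁻¹) Y * Y *
      cfc (fun t : ℝ => (Real.sqrt (max t 0 + s))⁻¹) Y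
    = cfc (fun t : ℝ => max t 0 * (max t 0 + s)⁻¹) Y := by
  rw [conj_cfc Y hY _ (cont_n hs)]
  apply cfc_congr
  intro t ht
  have ht0 : 0 ≤ t := spectrum_nonneg_of_nonneg hY ht
  have hd := den_pos hs t
  have h2 : (Real.sqrt (max t 0 + s))⁻¹ * (Real.sqrt (max t 0 + s))⁻¹ = (max t 0 + s)⁻¹ := by
    rw [← mul_inv, Real.mul_self_sqrt hd.le]
  calc (Real.sqrt (max t 0 + s))⁻¹ * t * (Real.sqrt (max t 0 + s))⁻¹
      = ((Real.sqrt (max t 0 + s))⁻¹ * (Real.sqrt (max t 0 + s))⁻¹) * t := by ring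
    _ = (max t 0 + s)⁻¹ * t := by rw [h2]
    _ = max t 0 * (max t 0 + s)⁻¹ := by rw [max_eq_left ht0]; ring

end CLEAux

open CLEAux

namespace CLE'
variable {a b c : E}

lemma trans (hab : CLE' a b) (hbc : CLE' b c) : CLE' a c := by
  intro ε hε
  obtain ⟨v, hv⟩ := hab (ε / 2) (by positivity)
  obtain ⟨w, hw⟩ := hbc (ε / (2 * (‖v‖ * ‖v‖ + 1))) (by positivity)
  refine ⟨v * w, ?_⟩
  have key : v * w * c * star (v * w) - a
      = v * (w * c * star w - b) * star v + (v * b * star v - a) := by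
    rw [star_mul]; noncomm_ring
  rw [key]
  have h1 : ‖v * (w * c * star w - b) * star v‖ ≤ ‖v‖ * ‖w * c * star w - b‖ * ‖v‖ := by
    calc ‖v * (w * c * star w - b) * star v‖
        ≤ ‖v * (w * c * star w - b)‖ * ‖star v‖ := norm_mul_le _ _
      _ ≤ ‖v‖ * ‖w * c * star w - b‖ * ‖star v‖ := by
          gcongr; exact norm_mul_le _ _
      _ = ‖v‖ * ‖w * c * star w - b‖ * ‖v‖ := by rw [norm_star]
  have h2 : ‖v‖ * ‖w * c * star w - b‖ * ‖v‖ < ε / 2 := by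
    have h3 := (lt_div_iff₀ (show (0:ℝ) < 2 * (‖v‖ * ‖v‖ + 1) by positivity)).mp hw
    nlinarith [norm_nonneg (w * c * star w - b), mul_self_nonneg ‖v‖]
  calc ‖v * (w * c * star w - b) * star v + (v * b * star v - a)‖
      ≤ ‖v * (w * c * star w - b) * star v‖ + ‖v * b * star v - a‖ := norm_add_le _ _
    _ < ε / 2 + ε / 2 := add_lt_add (lt_of_le_of_lt h1 h2) hv
    _ = ε := by ring

lemma conj (g : E) (h : CLE' a b) : CLE' (g * a * star g) b := by
  intro ε hε
  obtain ⟨v, hv⟩ := h (ε / (‖g‖ * ‖g‖ + 1)) (by positivity)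
  refine ⟨g * v, ?_⟩
  have key : g * v * b * star (g * v) - g * a * star g
      = g * (v * b * star v - a) * star g := by
    rw [star_mul]; noncomm_ring
  rw [key]
  have h1 : ‖g * (v * b * star v - a) * star g‖ ≤ ‖g‖ * ‖v * b * star v - a‖ * ‖g‖ := by
    calc ‖g * (v * b * star v - a) * star g‖
        ≤ ‖g * (v * b * star v - a)‖ * ‖star g‖ := norm_mul_le _ _
      _ ≤ ‖g‖ * ‖v * b * star v - a‖ * ‖star g‖ := by gcongr; exact norm_mul_le _ _
      _ = _ := by rw [norm_star]
  refine lt_of_le_of_lt h1 ?_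
  have h3 := (lt_div_iff₀ (show (0:ℝ) < ‖g‖ * ‖g‖ + 1 by positivity)).mp hv
  nlinarith [norm_nonneg (v * b * star v - a), mul_self_nonneg ‖g‖]

lemma smul_self {r : ℝ} (hr : 0 < r) (a : E) : CLE' a (r • a) := by
  intro ε hε
  refine ⟨Real.sqrt r⁻¹ • 1, ?_⟩
  have key : (Real.sqrt r⁻¹ • (1:E)) * (r • a) * star (Real.sqrt r⁻¹ • (1:E)) = a := by
    rw [star_smul, star_one, star_trivial]
    simp only [smul_mul_assoc, mul_smul_comm, one_mul, mul_one]
    rw [smul_smul, smul_smul]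
    have h2 : Real.sqrt r⁻¹ * r * Real.sqrt r⁻¹ = (Real.sqrt r⁻¹ * Real.sqrt r⁻¹) * r := by
      ring
    rw [h2, Real.mul_self_sqrt (inv_nonneg.mpr hr.le), inv_mul_cancel₀ hr.ne', one_smul]
  rw [key, sub_self, norm_zero]; exact hε

lemma of_smul {r : ℝ} (hr : 0 ≤ r) (h : CLE' a (r • b)) : CLE' a b := by
  intro ε hε
  obtain ⟨v, hv⟩ := h ε hε
  refine ⟨Real.sqrt r • v, ?_⟩
  have key : (Real.sqrt r • v) * b * star (Real.sqrt r • v) = v * (r • b) * star v := by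
    rw [star_smul, star_trivial]
    simp only [smul_mul_assoc, mul_smul_comm]
    rw [smul_smul, Real.mul_self_sqrt hr]
  rw [key]; exact hv

lemma of_le (ha : 0 ≤ a) (hab : a ≤ b) : CLE' a b := by
  have hb : 0 ≤ b := ha.trans hab
  intro ε hε
  set s := ε / 2 with hs
  have hs0 : 0 < s := by positivity
  set u := cfc Real.sqrt a with hu
  have husa : IsSelfAdjoint u := cfc_predicate _ a
  have huu : u * u = a := sqrt_mul_sqrt_cfc a ha
  refine ⟨u * cfc (fun t : ℝ => (Real.sqrt (max t 0 + s))⁻¹) b, ?_⟩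
  set n := cfc (fun t : ℝ => (Real.sqrt (max t 0 + s))⁻¹) b with hn
  have hnsa : IsSelfAdjoint n := cfc_predicate _ b
  have key : u * n * b * star (u * n) = u * (n * b * n) * u := by
    rw [star_mul, hnsa.star_eq, husa.star_eq]; simp [mul_assoc]
  rw [key, hn, nsYns b hb hs0]
  have happrox := approx b u hb (by rw [husa.star_eq, huu]; exact hab) hs0
  rw [husa.star_eq, huu] at happrox
  calc ‖u * cfc (fun t : ℝ => max t 0 * (max t 0 + s)⁻¹) b * u - a‖ ≤ s := happrox
    _ < ε := by rw [hs]; linarith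

lemma star_mul_self_cle (x : E) : CLE' (star x * x) (x * star x) := by
  intro ε hε
  set s := ε / 2 with hs
  have hs0 : 0 < s := by positivity
  have hY : 0 ≤ x * star x := mul_star_self_nonneg x
  refine ⟨star x * cfc (fun t : ℝ => (Real.sqrt (max t 0 + s))⁻¹) (x * star x), ?_⟩
  set n := cfc (fun t : ℝ => (Real.sqrt (max t 0 + s))⁻¹) (x * star x) with hn
  have hnsa : IsSelfAdjoint n := cfc_predicate _ (x * star x)
  have key : star x * n * (x * star x) * star (star x * n)
      = star x * (n * (x * star x) * n) * x := by
    rw [star_mul, hnsa.star_eq, star_star]; simp [mul_assoc]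
  rw [key, hn, nsYns (x * star x) hY hs0]
  have happrox := approx (x * star x) x hY le_rfl hs0
  calc ‖star x * cfc (fun t : ℝ => max t 0 * (max t 0 + s)⁻¹) (x * star x) * x - star x * x‖
      ≤ s := happrox
    _ < ε := by rw [hs]; linarith

lemma add_orth {d₁ d₂ a b : E} (hd₁ : 0 ≤ d₁) (hd₂ : 0 ≤ d₂) (horth : d₁ * d₂ = 0)
    (h₁ : CLE' a d₁) (h₂ : CLE' b d₂) : CLE' (a + b) (d₁ + d₂) := by
  have hd₁sa : IsSelfAdjoint d₁ := .of_nonneg hd₁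
  have hd₂sa : IsSelfAdjoint d₂ := .of_nonneg hd₂
  have h21 : d₂ * d₁ = 0 := by
    have := congrArg star horth
    rwa [star_mul, hd₁sa.star_eq, hd₂sa.star_eq, star_zero] at this
  intro ε hε
  obtain ⟨v, hv⟩ := h₁ (ε/4) (by positivity)
  obtain ⟨w, hw⟩ := h₂ (ε/4) (by positivity)
  set s := ε / (4 * (‖v‖*‖v‖ + ‖w‖*‖w‖ + 1)) with hsdef
  have hs0 : 0 < s := by positivity
  set β : ℝ → ℝ := fun t => Real.sqrt t * (Real.sqrt (max t 0 + s))⁻¹ with hβ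
  have hβc : Continuous β := Real.continuous_sqrt.mul (cont_n hs0)
  -- factorization of k's
  have hfact : ∀ d : E, 0 ≤ d → cfc β d = cfc (fun t : ℝ => (Real.sqrt (max t 0 + s))⁻¹) d
      * cfc Real.sqrt d := by
    intro d hd
    rw [← cfc_mul _ _ d (cont_n hs0).continuousOn Real.continuous_sqrt.continuousOn]
    exact cfc_congr fun t _ => mul_comm _ _
  have hfact' : ∀ d : E, 0 ≤ d → cfc β d = cfc Real.sqrt d
      * cfc (fun t : ℝ => (Real.sqrt (max t 0 + s))⁻¹) d := by
    intro d hd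
    rw [← cfc_mul _ _ d Real.continuous_sqrt.continuousOn (cont_n hs0).continuousOn]
  set k₁ := cfc β d₁ with hk₁
  set k₂ := cfc β d₂ with hk₂
  have hk₁sa : IsSelfAdjoint k₁ := cfc_predicate _ d₁
  have hk₂sa : IsSelfAdjoint k₂ := cfc_predicate _ d₂
  -- orthogonality facts
  have h12s : cfc Real.sqrt d₁ * d₂ = 0 := orth_sqrt hd₁ horth
  have h21s : cfc Real.sqrt d₂ * d₁ = 0 := orth_sqrt hd₂ h21
  have h12s' : d₁ * cfc Real.sqrt d₂ = 0 := by
    have := congrArg star h21s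
    rwa [star_mul, hd₁sa.star_eq, (cfc_predicate Real.sqrt d₂ :
      IsSelfAdjoint (cfc Real.sqrt d₂)).star_eq, star_zero] at this
  have hk₁d₂ : k₁ * d₂ = 0 := by
    rw [hk₁, hfact d₁ hd₁, mul_assoc, h12s, mul_zero]
  have hk₂d₁ : k₂ * d₁ = 0 := by
    rw [hk₂, hfact d₂ hd₂, mul_assoc, h21s, mul_zero]
  have hd₁k₂ : d₁ * k₂ = 0 := by
    rw [hk₂, hfact' d₂ hd₂, ← mul_assoc, h12s', zero_mul]
  -- cross terms vanish
  have hcross12 : k₁ * (d₁ + d₂) * k₂ = 0 := by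
    rw [mul_add, add_mul, mul_assoc, hd₁k₂, mul_zero, hk₁d₂, zero_mul, add_zero]
  have hcross21 : k₂ * (d₁ + d₂) * k₁ = 0 := by
    have := congrArg star hcross12
    rwa [star_mul, star_mul, hk₁sa.star_eq, hk₂sa.star_eq,
      (hd₁sa.add hd₂sa).star_eq, star_zero, ← mul_assoc] at this
  -- diagonal terms
  have hdiag : ∀ d : E, 0 ≤ d → ‖cfc β d * d * cfc β d - d‖ ≤ s := by
    intro d hd
    rw [conj_cfc d hd β hβc]
    have hsub : cfc (fun t : ℝ => β t * t * β t) d - d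
        = cfc (fun t : ℝ => β t * t * β t - t) d := by
      have h1 : cfc (fun t : ℝ => t) d = d := cfc_id' ℝ d (IsSelfAdjoint.of_nonneg hd)
      calc cfc (fun t : ℝ => β t * t * β t) d - d
          = cfc (fun t : ℝ => β t * t * β t) d - cfc (fun t : ℝ => t) d := by rw [h1]
        _ = cfc (fun t : ℝ => β t * t * β t - t) d :=
            (cfc_sub (fun t : ℝ => β t * t * β t) (fun t : ℝ => t) d
              ((hβc.mul (by fun_prop)).mul hβc).continuousOn (by fun_prop)).symm
    rw [hsub]
    apply norm_cfc_le hs0.le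
    intro t ht
    have ht0 : 0 ≤ t := spectrum_nonneg_of_nonneg hd ht
    have hdp := den_pos hs0 t
    have hβv : β t * β t = t * (max t 0 + s)⁻¹ := by
      rw [hβ]
      have : Real.sqrt t * (Real.sqrt (max t 0 + s))⁻¹ * (Real.sqrt t * (Real.sqrt (max t 0 + s))⁻¹)
          = (Real.sqrt t * Real.sqrt t) * ((Real.sqrt (max t 0 + s))⁻¹ * (Real.sqrt (max t 0 + s))⁻¹) := by
        ring
      rw [this, Real.mul_self_sqrt ht0, ← mul_inv, Real.mul_self_sqrt hdp.le]
    have hval : β t * t * β t - t = -(t * (s * (max t 0 + s)⁻¹)) := by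
      have h5 : β t * t * β t = (β t * β t) * t := by ring
      rw [h5, hβv, max_eq_left ht0]
      field_simp
      ring
    rw [hval, norm_neg, Real.norm_eq_abs, max_eq_left ht0] at *
    rw [abs_of_nonneg (by positivity)]
    have h9 : t * (t + s)⁻¹ ≤ 1 := by
      rw [← div_eq_mul_inv, div_le_one hdp]; linarith
    calc t * (s * (t + s)⁻¹) = s * (t * (t+s)⁻¹) := by ring
      _ ≤ s * 1 := by nlinarith
      _ = s := mul_one s
  set u := v * k₁ + w * k₂ with hu
  refine ⟨u, ?_⟩
  have hustar : star u = k₁ * star v + k₂ * star w := by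
    rw [hu, star_add, star_mul, star_mul, hk₁sa.star_eq, hk₂sa.star_eq]
  have expand : u * (d₁ + d₂) * star u
      = v * (k₁ * (d₁ + d₂) * k₁) * star v + v * (k₁ * (d₁ + d₂) * k₂) * star w
      + w * (k₂ * (d₁ + d₂) * k₁) * star v + w * (k₂ * (d₁ + d₂) * k₂) * star w := by
    rw [hu, hustar]; noncomm_ring
  have hKD₁ : k₁ * (d₁ + d₂) * k₁ = k₁ * d₁ * k₁ := by
    rw [mul_add, add_mul, hk₁d₂, zero_mul, add_zero]
  have hKD₂ : k₂ * (d₁ + d₂) * k₂ = k₂ * d₂ * k₂ := by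
    rw [mul_add, add_mul, hk₂d₁, zero_mul, zero_add]
  rw [expand, hcross12, hcross21, mul_zero, zero_mul, mul_zero, zero_mul, hKD₁, hKD₂]
  have key : v * (k₁ * d₁ * k₁) * star v + 0 + 0 + w * (k₂ * d₂ * k₂) * star w - (a + b)
      = (v * (k₁ * d₁ * k₁ - d₁) * star v + (v * d₁ * star v - a))
      + (w * (k₂ * d₂ * k₂ - d₂) * star w + (w * d₂ * star w - b)) := by
    noncomm_ring
  rw [key]
  have hb1 : ‖v * (k₁ * d₁ * k₁ - d₁) * star v‖ ≤ ‖v‖ * s * ‖v‖ := by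
    calc ‖v * (k₁ * d₁ * k₁ - d₁) * star v‖
        ≤ ‖v * (k₁ * d₁ * k₁ - d₁)‖ * ‖star v‖ := norm_mul_le _ _
      _ ≤ ‖v‖ * ‖k₁ * d₁ * k₁ - d₁‖ * ‖star v‖ := by gcongr; exact norm_mul_le _ _
      _ = ‖v‖ * ‖k₁ * d₁ * k₁ - d₁‖ * ‖v‖ := by rw [norm_star]
      _ ≤ ‖v‖ * s * ‖v‖ :=
          mul_le_mul_of_nonneg_right
            (mul_le_mul_of_nonneg_left (hdiag d₁ hd₁) (norm_nonneg v)) (norm_nonneg v)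
  have hb2 : ‖w * (k₂ * d₂ * k₂ - d₂) * star w‖ ≤ ‖w‖ * s * ‖w‖ := by
    calc ‖w * (k₂ * d₂ * k₂ - d₂) * star w‖
        ≤ ‖w * (k₂ * d₂ * k₂ - d₂)‖ * ‖star w‖ := norm_mul_le _ _
      _ ≤ ‖w‖ * ‖k₂ * d₂ * k₂ - d₂‖ * ‖star w‖ := by gcongr; exact norm_mul_le _ _
      _ = ‖w‖ * ‖k₂ * d₂ * k₂ - d₂‖ * ‖w‖ := by rw [norm_star]
      _ ≤ ‖w‖ * s * ‖w‖ :=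
          mul_le_mul_of_nonneg_right
            (mul_le_mul_of_nonneg_left (hdiag d₂ hd₂) (norm_nonneg w)) (norm_nonneg w)
  have hsmall : ‖v‖ * s * ‖v‖ + ‖w‖ * s * ‖w‖ ≤ ε / 4 := by
    have h3 : s * (4 * (‖v‖*‖v‖ + ‖w‖*‖w‖ + 1)) = ε := by
      rw [hsdef]; field_simp
    nlinarith [mul_self_nonneg ‖v‖, mul_self_nonneg ‖w‖, hs0.le]
  calc ‖(v * (k₁ * d₁ * k₁ - d₁) * star v + (v * d₁ * star v - a))
      + (w * (k₂ * d₂ * k₂ - d₂) * star w + (w * d₂ * star w - b))‖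
      ≤ ‖v * (k₁ * d₁ * k₁ - d₁) * star v‖ + ‖v * d₁ * star v - a‖
        + (‖w * (k₂ * d₂ * k₂ - d₂) * star w‖ + ‖w * d₂ * star w - b‖) := by
          refine (norm_add_le _ _).trans ?_
          gcongr <;> exact norm_add_le _ _
    _ < (‖v‖ * s * ‖v‖ + ε/4) + (‖w‖ * s * ‖w‖ + ε/4) :=
          add_lt_add (add_lt_add_of_le_of_lt hb1 hv) (add_lt_add_of_le_of_lt hb2 hw)
    _ ≤ ε := by linarith

end CLE'
end Unital



section Transfer
variable {A : Type*} [NonUnitalCStarAlgebra A] [PartialOrder A] [StarOrderedRing A]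

open CLEAux Unitization

lemma cuntzLE_iff (t d : A) :
    CuntzLE t d ↔ ∀ ε : ℝ, 0 < ε → ∃ v : A, ‖v * d * star v - t‖ < ε := by
  constructor
  · rintro ⟨v, hv⟩ ε hε
    obtain ⟨N, hN⟩ := (Metric.tendsto_atTop.mp hv) ε hε
    refine ⟨v N, ?_⟩
    have := hN N le_rfl
    rwa [Real.dist_eq, sub_zero, abs_of_nonneg (norm_nonneg _)] at this
  · intro h
    choose v hv using fun n : ℕ => h (1/(n+1)) (by positivity)
    refine ⟨v, ?_⟩
    apply squeeze_zero (fun n => norm_nonneg _) (fun n => (hv n).le)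
    exact tendsto_one_div_add_atTop_nhds_zero_nat

lemma inr_arith (v t d : A) :
    ((v * d * star v - t : A) : A⁺¹) = (v : A⁺¹) * d * star (v : A⁺¹) - t := by
  rw [Unitization.inr_sub ℂ, Unitization.inr_mul ℂ, Unitization.inr_mul ℂ,
    Unitization.inr_star]

lemma cle_of_cuntzLE {t d : A} (h : CuntzLE t d) : CLE' (t : A⁺¹) (d : A⁺¹) := by
  intro ε hε
  obtain ⟨v, hv⟩ := (cuntzLE_iff t d).mp h ε hε
  refine ⟨(v : A⁺¹), ?_⟩
  rw [← inr_arith, Unitization.norm_inr]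
  exact hv

lemma cuntzLE_of_cle {t d : A} (hd : 0 ≤ d) (h : CLE' (t : A⁺¹) (d : A⁺¹)) :
    CuntzLE t d := by
  rw [cuntzLE_iff]
  intro ε hε
  obtain ⟨v, hv⟩ := h (ε/2) (by positivity)
  set s := ε / (8 * (‖v‖ * ‖v‖ + 1)) with hsdef
  have hs0 : 0 < s := by positivity
  set f : ℝ → ℝ := fun t => max t 0 * (max t 0 + s)⁻¹ with hf
  have hf0 : f 0 = 0 := by simp [hf]
  set m : A := cfcₙ f d with hmdef
  have hD : (0 : A⁺¹) ≤ (d : A⁺¹) := Unitization.inr_nonneg_iff.mpr hd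
  have hm : (m : A⁺¹) = cfc f (d : A⁺¹) := Unitization.real_cfcₙ_eq_cfc_inr d f hf0
  set V := v * (m : A⁺¹) with hV
  have hVfst : V.fst = 0 := by rw [hV, Unitization.fst_mul, Unitization.fst_inr, mul_zero]
  refine ⟨V.snd, ?_⟩
  have hVsnd : ((V.snd : A) : A⁺¹) = V := by
    conv_rhs => rw [← Unitization.inl_fst_add_inr_snd_eq V]
    rw [hVfst, Unitization.inl_zero, zero_add]
  have hMsa : IsSelfAdjoint (cfc f (d : A⁺¹)) := cfc_predicate _ _
  have hVcomp : V * (d : A⁺¹) * star V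
      = v * (cfc f (d : A⁺¹) * (d : A⁺¹) * cfc f (d : A⁺¹)) * star v := by
    rw [hV, hm, star_mul, hMsa.star_eq]
    simp [mul_assoc]
  have hconj : cfc f (d : A⁺¹) * (d : A⁺¹) * cfc f (d : A⁺¹)
      = cfc (fun t : ℝ => f t * t * f t) (d : A⁺¹) := conj_cfc _ hD f (cont_m hs0)
  have hdiff : cfc (fun t : ℝ => f t * t * f t) (d : A⁺¹) - (d : A⁺¹)
      = cfc (fun t : ℝ => f t * t * f t - t) (d : A⁺¹) := by
    have h1 : cfc (fun t : ℝ => t) (d : A⁺¹) = (d : A⁺¹) :=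
      cfc_id' ℝ _ (IsSelfAdjoint.of_nonneg hD)
    calc cfc (fun t : ℝ => f t * t * f t) (d : A⁺¹) - (d : A⁺¹)
        = cfc (fun t : ℝ => f t * t * f t) (d : A⁺¹) - cfc (fun t : ℝ => t) (d : A⁺¹) := by
          rw [h1]
      _ = _ := (cfc_sub (fun t : ℝ => f t * t * f t) (fun t : ℝ => t) (d : A⁺¹)
          (((cont_m hs0).mul (by fun_prop)).mul (cont_m hs0)).continuousOn (by fun_prop)).symm
  have hnormdiff : ‖cfc (fun t : ℝ => f t * t * f t - t) (d : A⁺¹)‖ ≤ 2 * s := by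
    apply norm_cfc_le (by positivity)
    intro t ht
    have ht0 : 0 ≤ t := spectrum_nonneg_of_nonneg hD ht
    have hdp := den_pos hs0 t
    rw [max_eq_left ht0] at hdp
    have hft : f t = t * (t+s)⁻¹ := by rw [hf]; simp [max_eq_left ht0]
    have hval : f t * t * f t - t = -(t * (s * (2*t+s)) / ((t+s)*(t+s))) := by
      rw [hft]; field_simp; ring
    rw [hval, norm_neg, Real.norm_eq_abs, abs_of_nonneg (by positivity)]
    rw [div_le_iff₀ (by positivity)]
    nlinarith [hs0.le, ht0, mul_nonneg ht0 (mul_nonneg hs0.le hs0.le), mul_nonneg (mul_nonneg ht0 ht0) hs0.le]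
  have key : V * (d : A⁺¹) * star V - (t : A⁺¹)
      = v * (cfc (fun t : ℝ => f t * t * f t) (d : A⁺¹) - (d : A⁺¹)) * star v
        + (v * (d : A⁺¹) * star v - (t : A⁺¹)) := by
    rw [hVcomp, hconj]; noncomm_ring
  have hb : ‖v * (cfc (fun t : ℝ => f t * t * f t) (d : A⁺¹) - (d : A⁺¹)) * star v‖
      ≤ ‖v‖ * (2*s) * ‖v‖ := by
    refine (norm_conj_le v _).trans ?_
    have := hdiff ▸ hnormdiff
    exact mul_le_mul_of_nonneg_right
      (mul_le_mul_of_nonneg_left this (norm_nonneg v)) (norm_nonneg v)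
  have hsmall : ‖v‖ * (2*s) * ‖v‖ ≤ ε / 4 := by
    have h3 : s * (8 * (‖v‖*‖v‖ + 1)) = ε := by rw [hsdef]; field_simp
    nlinarith [mul_self_nonneg ‖v‖, hs0.le]
  have hfinal : ‖V * (d : A⁺¹) * star V - (t : A⁺¹)‖ < ε := by
    calc ‖V * (d : A⁺¹) * star V - (t : A⁺¹)‖
        ≤ ‖v * (cfc (fun t : ℝ => f t * t * f t) (d : A⁺¹) - (d : A⁺¹)) * star v‖
          + ‖v * (d : A⁺¹) * star v - (t : A⁺¹)‖ := key ▸ norm_add_le _ _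
      _ < ε/4 + ε/2 := add_lt_add_of_le_of_lt (hb.trans hsmall) hv
      _ < ε := by linarith
  rw [← Unitization.norm_inr (𝕜 := ℂ), inr_arith, hVsnd]
  exact hfinal

end Transfer

open CLEAux Unitization in
set_option maxHeartbeats 2000000 in
/-- If (b² − bpb − ε')₊ ≾ d₁ and p − c ≾ d₂ with d₁ ⊥ d₂, 0 ≤ c ≤ p and
0 < ε' ≤ ε, then (b² − bcb − 2ε)₊ ≾ d₁ + d₂. -/
theorem stmt10 {A : Type*} [NonUnitalCStarAlgebra A] [PartialOrder A] [StarOrderedRing A]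
    (b p c : A) (hb : 0 ≤ b) (hp : IsProjection p) (hc : 0 ≤ c) (hcp : c ≤ p)
    (ε ε' : ℝ) (hε' : 0 < ε') (hε'ε : ε' ≤ ε)
    (d₁ d₂ : A) (hd₁ : 0 ≤ d₁) (hd₂ : 0 ≤ d₂) (horth : d₁ * d₂ = 0)
    (h1 : CuntzLE (cutoff ε' (b * b - b * p * b)) d₁)
    (h2 : CuntzLE (p - c) d₂) :
    CuntzLE (cutoff (2 * ε) (b * b - b * c * b)) (d₁ + d₂) := by
  have hε : 0 < ε := lt_of_lt_of_le hε' hε'ε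
  have hbsa : IsSelfAdjoint b := .of_nonneg hb
  have hpsa : IsSelfAdjoint p := hp.1
  have hcsa : IsSelfAdjoint c := .of_nonneg hc
  set x := b * b - b * p * b with hx
  have hxsa : IsSelfAdjoint x := by
    rw [hx]
    simp only [IsSelfAdjoint, star_sub, star_mul, hbsa.star_eq, hpsa.star_eq]
    rw [mul_assoc]
  -- notation in the unitization
  set B : A⁺¹ := (b : A⁺¹) with hB
  have hBsa : IsSelfAdjoint B := Unitization.isSelfAdjoint_inr.mpr hbsa
  set P : A⁺¹ := (p : A⁺¹) with hP
  have hPsa : IsSelfAdjoint P := Unitization.isSelfAdjoint_inr.mpr hpsa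
  set X : A⁺¹ := (x : A⁺¹) with hX
  have hXsa : IsSelfAdjoint X := Unitization.isSelfAdjoint_inr.mpr hxsa
  set Y : A⁺¹ := ((b * p * b - b * c * b : A) : A⁺¹) with hY
  -- X is positive
  have hq : (0 : A⁺¹) ≤ 1 - P := by
    have hqsa : star (1 - P) = 1 - P := by rw [star_sub, star_one, hPsa.star_eq]
    have hqq : (1 - P) * (1 - P) = 1 - P := by
      have hPP : P * P = P := by rw [hP, ← Unitization.inr_mul, hp.2]
      have expand : (1 - P) * (1 - P) = 1 - P - P + P * P := by noncomm_ring
      rw [expand, hPP]; abel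
    calc (0 : A⁺¹) ≤ star (1 - P) * (1 - P) := star_mul_self_nonneg _
      _ = 1 - P := by rw [hqsa, hqq]
  have hXpos : (0 : A⁺¹) ≤ X := by
    have hXeq : X = star B * (1 - P) * B := by
      rw [hBsa.star_eq, hX, hx, Unitization.inr_sub ℂ, Unitization.inr_mul ℂ,
        Unitization.inr_mul ℂ, Unitization.inr_mul ℂ, ← hB, ← hP]
      noncomm_ring
    rw [hXeq]
    exact star_left_conjugate_nonneg hq B
  -- Y is positive
  have hYpos : (0 : A⁺¹) ≤ Y := by
    have hYeq : Y = star B * ((p - c : A) : A⁺¹) * B := by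
      rw [hBsa.star_eq, hY]
      have : b * p * b - b * c * b = b * (p - c) * b := by noncomm_ring
      rw [this, Unitization.inr_mul ℂ, Unitization.inr_mul ℂ, ← hB]
    rw [hYeq]
    exact star_left_conjugate_nonneg (Unitization.inr_nonneg_iff.mpr (sub_nonneg.mpr hcp)) B
  -- CLE' facts from hypotheses
  have hZ1 : CLE' ((cutoff ε' x : A) : A⁺¹) ((d₁ : A) : A⁺¹) := cle_of_cuntzLE h1
  have hY2 : CLE' Y ((d₂ : A) : A⁺¹) := by
    have hPC : CLE' (((p - c : A)) : A⁺¹) ((d₂ : A) : A⁺¹) := cle_of_cuntzLE h2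
    have := CLE'.conj B hPC
    rwa [hBsa.star_eq, show B * ((p - c : A) : A⁺¹) * B = Y by
      rw [hY, show b * p * b - b * c * b = b * (p - c) * b from by noncomm_ring,
        Unitization.inr_mul ℂ, Unitization.inr_mul ℂ, ← hB]] at this
  -- cutoff conversions
  have hf0' : max 0 (0 - ε') = 0 := by rw [zero_sub, max_eq_left (neg_nonpos.mpr hε'.le)]
  have hcut1 : ((cutoff ε' x : A) : A⁺¹) = cfc (fun t : ℝ => max 0 (t - ε')) X :=
    Unitization.real_cfcₙ_eq_cfc_inr x _ hf0'
  -- F1 : X ≤ cutoff + ε' • 1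
  have hF1 : X ≤ ((cutoff ε' x : A) : A⁺¹) + ε' • 1 := by
    rw [hcut1]
    have hmono : cfc (fun t : ℝ => t) X ≤ cfc (fun t : ℝ => max 0 (t - ε') + ε') X :=
      cfc_mono (fun t _ => by have := le_max_right 0 (t - ε'); linarith)
        (by fun_prop) (by fun_prop)
    have hsplit : cfc (fun t : ℝ => max 0 (t - ε') + ε') X
        = cfc (fun t : ℝ => max 0 (t - ε')) X + cfc (fun _ : ℝ => ε') X :=
      cfc_add X _ _ (by fun_prop) (by fun_prop)
    have hconst : cfc (fun _ : ℝ => ε') X = ε' • 1 := by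
      rw [cfc_const ε' X hXsa, Algebra.algebraMap_eq_smul_one]
    calc X = cfc (fun t : ℝ => t) X := (cfc_id' ℝ X hXsa).symm
      _ ≤ _ := hmono
      _ = _ := by rw [hsplit, hconst]
  -- S and Z
  set S : A⁺¹ := X + Y with hS
  have hSpos : (0 : A⁺¹) ≤ S := add_nonneg hXpos hYpos
  have hSeq : S = ((b * b - b * c * b : A) : A⁺¹) := by
    rw [hS, hX, hY, ← Unitization.inr_add ℂ, hx]
    norm_cast
    abel
  set Z : A⁺¹ := ((cutoff ε' x : A) : A⁺¹) + Y with hZ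
  have hcutpos : (0 : A⁺¹) ≤ ((cutoff ε' x : A) : A⁺¹) := by
    rw [hcut1]; exact cfc_nonneg fun t _ => le_max_left 0 (t - ε')
  have hZpos : (0 : A⁺¹) ≤ Z := add_nonneg hcutpos hYpos
  have hSZ : S ≤ Z + ε' • 1 := by
    calc S = X + Y := hS
      _ ≤ (((cutoff ε' x : A) : A⁺¹) + ε' • 1) + Y := add_le_add_left hF1 Y
      _ = Z + ε' • 1 := by rw [hZ]; abel
  -- T' and w
  set h : ℝ → ℝ := fun t => max 0 (t - 2 * ε) with hh
  have hhc : Continuous h := by fun_prop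
  have hh0 : h 0 = 0 := by
    rw [hh]; simp only; rw [zero_sub, max_eq_left (neg_nonpos.mpr (by linarith))]
  set T' : A⁺¹ := cfc h S with hT'
  have hT'pos : (0 : A⁺¹) ≤ T' := cfc_nonneg fun t _ => le_max_left _ _
  have hT'sa : IsSelfAdjoint T' := cfc_predicate _ S
  have hTeq : ((cutoff (2 * ε) (b * b - b * c * b) : A) : A⁺¹) = T' := by
    rw [hT', hSeq]
    exact Unitization.real_cfcₙ_eq_cfc_inr _ _ hh0
  set w : A⁺¹ := cfc (fun t : ℝ => Real.sqrt (h t)) S with hw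
  have hwc : Continuous fun t : ℝ => Real.sqrt (h t) := Real.continuous_sqrt.comp hhc
  have hwsa : IsSelfAdjoint w := cfc_predicate _ S
  have hww : w * w = T' := by
    rw [hw, hT', ← cfc_mul _ _ S hwc.continuousOn hwc.continuousOn]
    exact cfc_congr fun t _ => Real.mul_self_sqrt (le_max_left _ _)
  -- (i)
  have hi : (2 * ε) • T' ≤ w * S * w := by
    rw [conj_cfc S hSpos _ hwc]
    have : (2 * ε) • T' = cfc (fun t : ℝ => (2 * ε) * h t) S := by
      rw [cfc_const_mul (2 * ε) h S hhc.continuousOn, hT']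
    rw [this]
    apply cfc_mono _ (by fun_prop) (by exact ((hwc.mul (by fun_prop)).mul hwc).continuousOn)
    intro t _
    have hsq : Real.sqrt (h t) * t * Real.sqrt (h t) = t * h t := by
      have : Real.sqrt (h t) * t * Real.sqrt (h t)
          = (Real.sqrt (h t) * Real.sqrt (h t)) * t := by ring
      rw [this, Real.mul_self_sqrt (le_max_left _ _)]; ring
    rw [hsq]
    rcases le_or_gt t (2 * ε) with hle | hlt
    · have : h t = 0 := by rw [hh]; simp only; rw [max_eq_left (by linarith)]
      rw [this]; simp
    · have hht : 0 ≤ h t := le_max_left _ _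
      nlinarith
  -- (ii)
  have hii : w * S * w ≤ w * Z * w + ε' • T' := by
    have hconj := IsSelfAdjoint.conjugate_le_conjugate hSZ hwsa
    have : w * (Z + ε' • 1) * w = w * Z * w + ε' • T' := by
      rw [mul_add, add_mul, mul_smul_comm, smul_mul_assoc, mul_one, hww]
    rwa [this] at hconj
  -- (iii)
  have hiii : (2 * ε - ε') • T' ≤ w * Z * w := by
    have := hi.trans hii
    rw [sub_smul]
    rw [sub_le_iff_le_add]
    exact this
  have hlam : 0 < 2 * ε - ε' := by linarith
  -- Z½
  set Zr : A⁺¹ := cfc Real.sqrt Z with hZr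
  have hZrsa : IsSelfAdjoint Zr := cfc_predicate _ Z
  have hZrZr : Zr * Zr = Z := sqrt_mul_sqrt_cfc Z hZpos
  -- the chain
  have k1 : CLE' T' ((2 * ε - ε') • T') := CLE'.smul_self hlam T'
  have hsmulpos : (0 : A⁺¹) ≤ (2 * ε - ε') • T' := by
    have : (2 * ε - ε') • T' = cfc (fun t : ℝ => (2 * ε - ε') * h t) S := by
      rw [cfc_const_mul (2 * ε - ε') h S hhc.continuousOn, hT']
    rw [this]
    exact cfc_nonneg fun t _ => mul_nonneg hlam.le (le_max_left _ _)
  have k2 : CLE' ((2 * ε - ε') • T') (w * Z * w) := CLE'.of_le hsmulpos hiii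
  have k3 : CLE' (w * Z * w) (Zr * T' * Zr) := by
    have := CLE'.star_mul_self_cle (Zr * w)
    have e1 : star (Zr * w) * (Zr * w) = w * Z * w := by
      rw [star_mul, hZrsa.star_eq, hwsa.star_eq, ← hZrZr]; noncomm_ring
    have e2 : (Zr * w) * star (Zr * w) = Zr * T' * Zr := by
      rw [star_mul, hZrsa.star_eq, hwsa.star_eq, ← hww]; noncomm_ring
    rwa [e1, e2] at this
  have k4 : CLE' (Zr * T' * Zr) ((‖T'‖ + 1) • Z) := by
    apply CLE'.of_le
    · have : Zr * T' * Zr = star Zr * T' * Zr := by rw [hZrsa.star_eq]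
      rw [this]; exact star_left_conjugate_nonneg hT'pos Zr
    · have hTle : T' ≤ (‖T'‖ + 1) • 1 := by
        calc T' ≤ algebraMap ℝ A⁺¹ ‖T'‖ := hT'sa.le_algebraMap_norm_self
          _ = ‖T'‖ • 1 := Algebra.algebraMap_eq_smul_one _
          _ ≤ (‖T'‖ + 1) • 1 := by
              have h01 : (0 : A⁺¹) ≤ 1 := by
                simpa using star_mul_self_nonneg (1 : A⁺¹)
              have : (‖T'‖ + 1) • (1:A⁺¹) - ‖T'‖ • 1 = 1 := by
                rw [← sub_smul]; simp
              rw [← sub_nonneg, this]; exact h01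
      calc Zr * T' * Zr ≤ Zr * ((‖T'‖ + 1) • 1) * Zr :=
            IsSelfAdjoint.conjugate_le_conjugate hTle hZrsa
        _ = (‖T'‖ + 1) • Z := by
            rw [mul_smul_comm, smul_mul_assoc, mul_one, hZrZr]
  have k5 : CLE' (Zr * T' * Zr) Z := CLE'.of_smul (by positivity) k4
  have k6 : CLE' Z (((d₁ : A) : A⁺¹) + ((d₂ : A) : A⁺¹)) := by
    refine CLE'.add_orth (Unitization.inr_nonneg_iff.mpr hd₁)
      (Unitization.inr_nonneg_iff.mpr hd₂) ?_ hZ1 hY2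
    rw [← Unitization.inr_mul ℂ, horth, Unitization.inr_zero]
  have total : CLE' T' (((d₁ + d₂ : A)) : A⁺¹) := by
    have := ((((k1.trans k2).trans k3).trans k5).trans k6)
    rwa [← Unitization.inr_add ℂ] at this
  exact cuntzLE_of_cle (add_nonneg hd₁ hd₂) (by rw [hTeq]; exact total)
end
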